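/- Let X_i, X_j, X_k, X_{ij}, X_{jk}, X_{ik} be nonzero real numbers and α_i, α_j, α_k nonzero real parameters, with all factors appearing in denominators below nonzero. Suppose the corner equation (E_i): ((α_j X_i − X_{ij})/X_i) · ((α_i X_i − α_j X_j)/(α_j X_i − α_i X_j)) · (X_i/(α_k X_i − X_{ik})) · ((α_k X_i − α_i X_k)/(α_i X_i − α_k X_k)) = 1 holds, together with the octahedron relation (α_j X_{ij} − α_k X_{ik})/X_i + (α_k X_{jk} − α_i X_{ij})/X_j + (α_i X_{ik} − α_j X_{jk})/X_k = 0. Then the corner equation (E_j), obtained from (E_i) by the cyclic substitution (i,j,k) → (j,k,i), namely ((α_k X_j − X_{jk})/X_j) · ((α_j X_j − α_k X_k)/(α_k X_j − α_j X_k)) · (X_j/(α_i X_j − X_{ij})) · ((α_i X_j − α_j X_i)/(α_j X_j − α_i X_i)) = 1, also holds. -/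

import Mathlib

theorem stmt8 (Xi Xj Xk Xij Xjk Xik ai aj ak : ℝ)
    (hXi : Xi ≠ 0) (hXj : Xj ≠ 0) (hXk : Xk ≠ 0)
    (hXij : Xij ≠ 0) (hXjk : Xjk ≠ 0) (hXik : Xik ≠ 0)
    (hai : ai ≠ 0) (haj : aj ≠ 0) (hak : ak ≠ 0)
    (d1 : aj * Xi - ai * Xj ≠ 0) (d2 : ak * Xi - Xik ≠ 0)
    (d3 : ai * Xi - ak * Xk ≠ 0)
    (d4 : ak * Xj - aj * Xk ≠ 0) (d5 : ai * Xj - Xij ≠ 0)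
    (d6 : aj * Xj - ai * Xi ≠ 0)
    (hEi : ((aj * Xi - Xij) / Xi) * ((ai * Xi - aj * Xj) / (aj * Xi - ai * Xj))
        * (Xi / (ak * Xi - Xik)) * ((ak * Xi - ai * Xk) / (ai * Xi - ak * Xk)) = 1)
    (hOct : (aj * Xij - ak * Xik) / Xi + (ak * Xjk - ai * Xij) / Xj
        + (ai * Xik - aj * Xjk) / Xk = 0) :
    ((ak * Xj - Xjk) / Xj) * ((aj * Xj - ak * Xk) / (ak * Xj - aj * Xk))
      * (Xj / (ai * Xj - Xij)) * ((ai * Xj - aj * Xi) / (aj * Xj - ai * Xi)) = 1 := by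
  rw [div_mul_div_comm, div_mul_div_comm, div_mul_div_comm,
    div_eq_one_iff_eq (mul_ne_zero (mul_ne_zero (mul_ne_zero hXi d1) d2) d3)] at hEi
  rw [div_add_div _ _ hXi hXj, div_add_div _ _ (mul_ne_zero hXi hXj) hXk, div_eq_zero_iff] at hOct
  replace hOct := hOct.resolve_right (mul_ne_zero (mul_ne_zero hXi hXj) hXk)
  rw [div_mul_div_comm, div_mul_div_comm, div_mul_div_comm,
    div_eq_one_iff_eq (mul_ne_zero (mul_ne_zero (mul_ne_zero hXj d4) d5) d6)]
  have key : Xi * (Xi * ((ak * Xj - Xjk) * (aj * Xj - ak * Xk) * Xj * (ai * Xj - aj * Xi)))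
      = Xi * (Xi * (Xj * (ak * Xj - aj * Xk) * (ai * Xj - Xij) * (aj * Xj - ai * Xi))) := by
    linear_combination Xj ^ 2 * hEi + Xi * Xj * (ai * Xj - aj * Xi) * hOct
  exact mul_left_cancel₀ hXi (mul_left_cancel₀ hXi key)
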